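/- Let n ≥ 1 and t ≥ 0 be integers. If n is even then 2·j(n,t) = C(n+1, 2t+1), and if n is odd then 2·j(n,t) = C(n+1, 2t), where C denotes the blobbed Catalan triangle and j(n,t) counts left extensions of w_n^J with t added dots in row n. -/

import Mathlib

/-- Auxiliary (index-shifted) version of the blobbed Catalan triangle:
`blobbedCAux (i+1) (j+1) = C(i,j)`. -/
def blobbedCAux : ℕ → ℕ → ℕ
  | 0, j => if j % 2 = 0 then 1 else 0
  | 1, j => if j % 2 = 1 then 1 else 0
  | _ + 2, 0 => 0
  | i + 2, j + 1 => blobbedCAux (i + 1) j + blobbedCAux (i + 1) (j + 2)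

/-- The blobbed Catalan triangle `C(i,j)`, defined for integers `i, j ≥ -1`:
`C(i,j) = 1` if `i ∈ {-1,0}` and `i+j` is even, `C(i,j) = 0` if `i ∈ {-1,0}` and `i+j`
is odd, `C(i,-1) = 0` for `i ≥ 1`, and `C(i,j) = C(i-1,j-1) + C(i-1,j+1)` for
`i ≥ 1`, `j ≥ 0`. -/
def blobbedC (i j : ℤ) : ℕ := blobbedCAux (i + 1).toNat (j + 1).toNat

/-- `w` is a positive normal form on `n`: a sequence of blocks `(l_i, r_i)` with
`n ≥ l_1 ≥ … ≥ l_k ≥ 0`, `n ≥ r_1 ≥ … ≥ r_k ≥ 0`, `l_i ≤ r_i` for all `i`,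
where `l` may repeat (consecutively) only at the value `0` and `r` may repeat only
at the value `n`. -/
def IsPNF (n : ℤ) (w : List (ℤ × ℤ)) : Prop :=
  (∀ p ∈ w, 0 ≤ p.1 ∧ p.1 ≤ p.2 ∧ p.2 ≤ n) ∧
  List.Chain' (fun p q : ℤ × ℤ =>
    q.1 ≤ p.1 ∧ q.2 ≤ p.2 ∧ (q.1 = p.1 → p.1 = 0) ∧ (q.2 = p.2 → p.2 = n)) w

/-- The affine length of a normal form: the number of blocks whose right endpoint is `n`. -/
def affineLength (n : ℤ) (w : List (ℤ × ℤ)) : ℕ :=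
  w.countP (fun p => p.2 = n)

/-- `numPNF n s` is the number `a(n,s)` of positive normal forms on `n` of affine length `s`. -/
noncomputable def numPNF (n : ℤ) (s : ℕ) : ℕ :=
  Nat.card {w : List (ℤ × ℤ) // IsPNF n w ∧ affineLength n w = s}

/-- The grid of a normal form `((l_1,r_1),…,(l_k,r_k))`:
`{(i,j) ∈ ℤ² : 1 ≤ i ≤ k, l_i ≤ j ≤ r_i}`. -/
def grid (w : List (ℤ × ℤ)) : Set (ℤ × ℤ) :=
  {p | ∃ i : ℕ, i < w.length ∧ p.1 = (i : ℤ) + 1 ∧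
    (w.getD i (0, 0)).1 ≤ p.2 ∧ p.2 ≤ (w.getD i (0, 0)).2}

/-- `G` contains a horizontal translate of `G'`. -/
def ContainsTranslate (G G' : Set (ℤ × ℤ)) : Prop :=
  ∃ m : ℤ, ∀ p ∈ G', ((p.1 + m, p.2) : ℤ × ℤ) ∈ G

/-- The normal form `w_n^I`. -/
def wI (n : ℤ) : List (ℤ × ℤ) :=
  if n = 1 then [(1, 1), (0, 1)]
  else if Even n then
    (n - 1, n) :: (((List.range ((n - 2) / 2).toNat).map
      fun t : ℕ => (n - 3 - 2 * (t : ℤ), n - 1 - 2 * (t : ℤ))) ++ [(0, 1)])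
  else
    (n, n) :: (n - 2, n) :: (((List.range ((n - 3) / 2).toNat).map
      fun t : ℕ => (n - 4 - 2 * (t : ℤ), n - 2 - 2 * (t : ℤ))) ++ [(0, 1)])

/-- The normal form `w_n^J`. -/
def wJ (n : ℤ) : List (ℤ × ℤ) :=
  if Even n then
    (n, n) :: (n - 2, n) :: (((List.range ((n - 2) / 2).toNat).map
      fun t : ℕ => (n - 4 - 2 * (t : ℤ), n - 2 - 2 * (t : ℤ))) ++ [(0, 0)])
  else
    (n - 1, n) :: (((List.range ((n - 1) / 2).toNat).map
      fun t : ℕ => (n - 3 - 2 * (t : ℤ), n - 1 - 2 * (t : ℤ))) ++ [(0, 0)])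

/-- `numBadPNF n s` is the number `d(n,s)` of positive normal forms on `n` of affine
length `s` whose grid contains a horizontal translate of `G(w_n^I)` or of `G(w_n^J)`. -/
noncomputable def numBadPNF (n : ℤ) (s : ℕ) : ℕ :=
  Nat.card {w : List (ℤ × ℤ) // IsPNF n w ∧ affineLength n w = s ∧
    (ContainsTranslate (grid w) (grid (wI n)) ∨ ContainsTranslate (grid w) (grid (wJ n)))}

/-- `leftExtCount n W t` is the number of positive normal forms on `n` of the shape
`(b_1,…,b_m,(l_1',ρ_1),…,(l_κ',ρ_κ))` where `W = ((λ_1,ρ_1),…,(λ_κ,ρ_κ))`,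
`l_i' ≤ λ_i` for all `i`, and exactly `t` of the prepended blocks `b_1,…,b_m` have
right endpoint equal to `n`. -/
noncomputable def leftExtCount (n : ℤ) (W : List (ℤ × ℤ)) (t : ℕ) : ℕ :=
  Nat.card {w : List (ℤ × ℤ) // IsPNF n w ∧ ∃ b tail : List (ℤ × ℤ),
    w = b ++ tail ∧ tail.length = W.length ∧
    (∀ i < W.length, (tail.getD i (0, 0)).2 = (W.getD i (0, 0)).2 ∧
      (tail.getD i (0, 0)).1 ≤ (W.getD i (0, 0)).1) ∧
    b.countP (fun p => p.2 = n) = t}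

/-- count of admissible sequences -/
noncomputable def cnt : List ℤ → ℤ → ℕ
  | [], _ => 1
  | b :: bs, c => ∑ x ∈ Finset.Icc 0 (min b c), cnt bs (max (x - 1) 0)

lemma blobbedC_rec (i j : ℤ) (hi : 1 ≤ i) (hj : 0 ≤ j) :
    blobbedC i j = blobbedC (i - 1) (j - 1) + blobbedC (i - 1) (j + 1) := by
  obtain ⟨a, rfl⟩ : ∃ a : ℕ, i = (a : ℤ) + 1 := ⟨(i - 1).toNat, by omega⟩
  obtain ⟨b, rfl⟩ : ∃ b : ℕ, j = (b : ℤ) := ⟨j.toNat, by omega⟩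
  have h1 : ((a : ℤ) + 1 + 1).toNat = a + 2 := by omega
  have h2 : ((b : ℤ) + 1).toNat = b + 1 := by omega
  have h3 : ((a : ℤ) + 1 - 1 + 1).toNat = a + 1 := by omega
  have h4 : ((b : ℤ) - 1 + 1).toNat = b := by omega
  have h5 : ((b : ℤ) + 1 + 1).toNat = b + 2 := by omega
  simp only [blobbedC, h1, h2, h3, h4, h5]
  rfl

lemma blobbedC_neg (i : ℤ) (hi : 1 ≤ i) : blobbedC i (-1) = 0 := by
  obtain ⟨a, rfl⟩ : ∃ a : ℕ, i = (a : ℤ) + 1 := ⟨(i - 1).toNat, by omega⟩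
  have h1 : ((a : ℤ) + 1 + 1).toNat = a + 2 := by omega
  have h2 : ((-1 : ℤ) + 1).toNat = 0 := by omega
  simp only [blobbedC, h1, h2]
  rfl

lemma blobbedC_one_period (K : ℤ) (hK : 0 ≤ K) : blobbedC 1 (K + 2) = blobbedC 1 K := by
  obtain ⟨b, rfl⟩ : ∃ b : ℕ, K = (b : ℤ) := ⟨K.toNat, by omega⟩
  have h1 : ((1 : ℤ) + 1).toNat = 2 := by omega
  have h2 : ((b : ℤ) + 2 + 1).toNat = b + 3 := by omega
  have h3 : ((b : ℤ) + 1).toNat = b + 1 := by omega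
  simp only [blobbedC, h1, h2, h3]
  show blobbedCAux 1 (b+2) + blobbedCAux 1 (b+4) = blobbedCAux 1 b + blobbedCAux 1 (b+2)
  have hp : ∀ j : ℕ, blobbedCAux 1 (j + 2) = blobbedCAux 1 j := by
    intro j; simp [blobbedCAux, Nat.add_mod]
  rw [hp (b+2), hp b]

lemma cnt_zero (bs : List ℤ) (b : ℤ) (hb : 0 ≤ b) : cnt (b :: bs) 0 = cnt bs 0 := by
  have h : min b 0 = 0 := by omega
  rw [cnt, h]
  simp

lemma cnt_succ (bs : List ℤ) (b c : ℤ) (h0 : 0 ≤ c) (hc : c + 1 ≤ b) :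
    cnt (b :: bs) (c + 1) = cnt bs c + cnt (b :: bs) c := by
  have h1 : min b (c + 1) = c + 1 := by omega
  have h2 : min b c = c := by omega
  have hset : Finset.Icc (0:ℤ) (c+1) = insert (c+1) (Finset.Icc 0 c) := by
    ext x; simp; omega
  have hnm : (c+1) ∉ Finset.Icc (0:ℤ) c := by simp
  rw [cnt, cnt, h1, h2, hset, Finset.sum_insert hnm]
  congr 1
  congr 1
  omega

/-- clamping the cap -/
lemma cnt_clamp (bs : List ℤ) (b c c' : ℤ) (hb : b ≤ c) (hb' : b ≤ c') :
    cnt (b :: bs) c = cnt (b :: bs) c' := by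
  rw [cnt, cnt, min_eq_left hb, min_eq_left hb']

/-- the key step lemma -/
lemma cnt_step (bs : List ℤ) (K b : ℤ) (hK : 0 ≤ K) (hb : 0 ≤ b)
    (h : ∀ c : ℤ, 0 ≤ c → c ≤ K → c ≤ b → 2 * cnt bs c = blobbedC (c + 1) (K - c)) :
    ∀ c : ℤ, 0 ≤ c → c ≤ b → c ≤ K + 1 →
      2 * cnt (b :: bs) c = blobbedC (c + 1) (K + 2 - c) := by
  suffices H : ∀ k : ℕ, (k : ℤ) ≤ b → (k : ℤ) ≤ K + 1 →
      2 * cnt (b :: bs) (k : ℤ) = blobbedC ((k : ℤ) + 1) (K + 2 - (k : ℤ)) by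
    intro c hc0 hcb hcK
    obtain ⟨k, rfl⟩ : ∃ k : ℕ, c = (k : ℤ) := ⟨c.toNat, by omega⟩
    exact H k hcb hcK
  intro k
  induction k with
  | zero =>
    intro _ _
    rw [Nat.cast_zero, cnt_zero bs b hb]
    have h0 := h 0 le_rfl hK hb
    rw [show K + 2 - (0:ℤ) = K + 2 by ring, show (0:ℤ) + 1 = 1 by ring,
      blobbedC_one_period K hK]
    simpa using h0
  | succ k ih =>
    intro hkb hkK
    have hk0 : (0:ℤ) ≤ (k:ℤ) := by positivity
    push_cast at hkb hkK ⊢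
    rw [cnt_succ bs b k hk0 (by omega)]
    rw [Nat.mul_add, ih (by omega) (by omega)]
    rw [h k hk0 (by omega) (by omega)]
    rw [blobbedC_rec ((k:ℤ)+1+1) (K+2-((k:ℤ)+1)) (by omega) (by omega)]
    have e1 : (k:ℤ) + 1 + 1 - 1 = (k:ℤ) + 1 := by ring
    have e2 : K + 2 - ((k:ℤ)+1) - 1 = K - (k:ℤ) := by ring
    have e3 : K + 2 - ((k:ℤ)+1) + 1 = K + 2 - (k:ℤ) := by ring
    rw [e1, e2, e3, Nat.add_comm]

/-- the staircase bound list: EL m = [2m, 2m-2, ..., 2, 0, 0] -/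
def EL : ℕ → List ℤ
  | 0 => [0, 0]
  | m + 1 => (2 * (m : ℤ) + 2) :: EL m

lemma cnt_EL (m : ℕ) : ∀ c : ℤ, 0 ≤ c → c ≤ 2 * m + 1 →
    2 * cnt (EL m) c = blobbedC (c + 1) (2 * m + 1 - c) := by
  induction m with
  | zero =>
    intro c hc0 hc1
    have hc : c = 0 ∨ c = 1 := by omega
    have hcnt : cnt (EL 0) c = 1 := by
      show cnt [0, 0] c = 1
      rcases hc with rfl | rfl <;>
        simp [cnt, show min (0:ℤ) (0:ℤ) = 0 from rfl, show min (0:ℤ) (1:ℤ) = 0 by omega]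
    rw [hcnt]
    rcases hc with rfl | rfl <;> decide
  | succ m ih =>
    intro c hc0 hc1
    push_cast at hc1 ⊢
    show 2 * cnt ((2 * (m : ℤ) + 2) :: EL m) c = _
    have ih' : ∀ c : ℤ, 0 ≤ c → c ≤ 2*(m:ℤ)+1 → c ≤ 2*(m:ℤ)+2 →
        2 * cnt (EL m) c = blobbedC (c + 1) (2 * (m:ℤ) + 1 - c) := fun c a b _ => ih c a b
    rcases le_or_gt c (2 * (m:ℤ) + 2) with hle | hgt
    · rw [show (2*((m:ℤ)+1)+1 - c) = 2*(m:ℤ)+1+2-c by ring]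
      exact cnt_step (EL m) (2*m+1) (2*m+2) (by omega) (by omega) ih' c hc0 hle (by omega)
    · have hc : c = 2 * (m:ℤ) + 3 := by omega
      subst hc
      rw [cnt_clamp (EL m) (2*(m:ℤ)+2) _ (2*(m:ℤ)+2) (by omega) le_rfl]
      rw [cnt_step (EL m) (2*m+1) (2*m+2) (by omega) (by omega) ih' (2*(m:ℤ)+2) (by omega) le_rfl (by omega)]
      rw [show (2*(m:ℤ)+2+1) = 2*(m:ℤ)+3 by ring, show (2*(m:ℤ)+1+2-(2*(m:ℤ)+2)) = 1 by ring,
        show (2*(m:ℤ)+3+1) = 2*(m:ℤ)+4 by ring, show (2*((m:ℤ)+1)+1-(2*(m:ℤ)+3)) = 0 by ring]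
      rw [blobbedC_rec (2*(m:ℤ)+4) 0 (by omega) (by omega),
        show 2*(m:ℤ)+4-1 = 2*(m:ℤ)+3 by ring, show (0:ℤ)-1 = -1 by ring,
        show (0:ℤ)+1 = 1 by ring, blobbedC_neg _ (by omega), Nat.zero_add]

lemma cnt_rep (n : ℤ) (m : ℕ) (hn1 : 1 ≤ n) (hn : n ≤ 2 * m + 1) :
    ∀ t : ℕ, ∀ c : ℤ, 0 ≤ c → c ≤ n →
      2 * cnt (List.replicate t n ++ EL m) c
        = blobbedC (c + 1) (2 * t + (2 * m + 1) - c) := by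
  intro t
  induction t with
  | zero =>
    intro c hc0 hcn
    simpa using cnt_EL m c hc0 (by omega)
  | succ t ih =>
    intro c hc0 hcn
    have : List.replicate (t+1) n ++ EL m = n :: (List.replicate t n ++ EL m) := by
      simp [List.replicate_succ]
    rw [this]
    have := cnt_step (List.replicate t n ++ EL m) (2*t + (2*m+1)) n
      (by positivity) (by omega)
      (fun c hc0 _ hcb => ih c hc0 hcb)
      c hc0 hcn (by omega)
    rw [this]
    push_cast
    congr 1
    ring


noncomputable def Seqs : List ℤ → ℤ → Finset (List ℤ)
  | [], _ => {[]}
  | b :: bs, c => (Finset.Icc 0 (min b c)).biUnion fun x => (Seqs bs (max (x - 1) 0)).image (x :: ·)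

lemma Seqs_card : ∀ (bs : List ℤ) (c : ℤ), (Seqs bs c).card = cnt bs c := by
  intro bs
  induction bs with
  | nil => intro c; simp [Seqs, cnt]
  | cons b bs ih =>
    intro c
    rw [Seqs, cnt, Finset.card_biUnion]
    · exact Finset.sum_congr rfl fun x _ => by
        rw [Finset.card_image_of_injective _ (fun a b h => by injection h), ih]
    · intro x _ y _ hxy
      simp only [Finset.disjoint_left, Finset.mem_image]
      rintro l ⟨u, _, rfl⟩ ⟨v, _, hv⟩
      exact hxy (by injection hv with h _; exact h.symm)

/-- strict-decrease-or-both-zero relation -/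
def SR (a x : ℤ) : Prop := x ≤ a - 1 ∨ (x = 0 ∧ a = 0)

lemma Seqs_mem : ∀ (bs : List ℤ) (c : ℤ) (l : List ℤ), 0 ≤ c →
    (l ∈ Seqs bs c ↔
      List.Forall₂ (fun x b => 0 ≤ x ∧ x ≤ b) l bs ∧
      (∀ x ∈ l.head?, x ≤ c) ∧ List.Chain' SR l) := by
  intro bs
  induction bs with
  | nil =>
    intro c l _
    constructor
    · intro h
      simp [Seqs] at h
      subst h
      exact ⟨List.Forall₂.nil, by simp, List.IsChain.nil⟩
    · rintro ⟨h, -, -⟩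
      cases h
      simp [Seqs]
  | cons b bs ih =>
    intro c l hc
    constructor
    · intro h
      simp only [Seqs, Finset.mem_biUnion, Finset.mem_image, Finset.mem_Icc] at h
      obtain ⟨x, ⟨hx0, hxbc⟩, u, hu, rfl⟩ := h
      obtain ⟨hf, hh, hch⟩ := (ih _ u (le_max_right _ _)).mp hu
      refine ⟨List.Forall₂.cons ⟨hx0, le_trans hxbc (min_le_left _ _)⟩ hf, ?_, ?_⟩
      · simp only [List.head?_cons, Option.mem_some_iff]
        rintro y rfl
        exact le_trans hxbc (min_le_right _ _)
      · cases u with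
        | nil => exact List.isChain_singleton _
        | cons y v =>
          refine List.IsChain.cons_cons ?_ hch
          have hy : y ≤ max (x - 1) 0 := hh y rfl
          have hy0 : 0 ≤ y := by
            rcases List.forall₂_cons_left_iff.mp hf with ⟨b', bs', hyb, _, _⟩
            exact hyb.1
          unfold SR; omega
    · rintro ⟨hf, hh, hch⟩
      rcases List.forall₂_cons_right_iff.mp hf with ⟨x, u, ⟨hx0, hxb⟩, hf', rfl⟩
      have hxc : x ≤ c := hh x rfl
      simp only [Seqs, Finset.mem_biUnion, Finset.mem_image, Finset.mem_Icc]
      refine ⟨x, ⟨hx0, le_min hxb hxc⟩, u, ?_, rfl⟩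
      rw [ih _ u (le_max_right _ _)]
      refine ⟨hf', ?_, hch.tail⟩
      intro y hy
      cases u with
      | nil => simp at hy
      | cons y' v =>
        simp only [List.head?_cons, Option.mem_some_iff] at hy
        have hsr := (List.isChain_cons_cons.mp hch).1
        have hy'0 : 0 ≤ y' := by
          rcases List.forall₂_cons_left_iff.mp hf' with ⟨b', bs', hyb, _, _⟩
          exact hyb.1
        rcases hsr with h | ⟨h1, h2⟩ <;> omega


/-- the "staircase" part: JL m = [(2m-2, 2m), (2m-4, 2m-2), ..., (0,2), (0,0)] -/
def JL : ℕ → List (ℤ × ℤ)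
  | 0 => [(0, 0)]
  | m + 1 => (2 * (m : ℤ), 2 * (m : ℤ) + 2) :: JL m

lemma JL_eq (m : ℕ) :
    ((List.range m).map fun t : ℕ => (2*(m:ℤ) - 2 - 2*t, 2*(m:ℤ) - 2*t)) ++ [((0:ℤ), (0:ℤ))]
      = JL m := by
  induction m with
  | zero => simp [JL]
  | succ m ih =>
    rw [List.range_succ_eq_map, List.map_cons, List.map_map]
    show ((2*((m:ℤ)+1) - 2 - 0, 2*((m:ℤ)+1) - 0) :: _) ++ _ = JL (m+1)
    push_cast
    rw [JL]
    have h2 : List.map ((fun t : ℕ => (2*((m:ℤ)+1) - 2 - 2*(t:ℤ), 2*((m:ℤ)+1) - 2*(t:ℤ))) ∘ Nat.succ) (List.range m)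
        = List.map (fun t : ℕ => (2*(m:ℤ) - 2 - 2*(t:ℤ), 2*(m:ℤ) - 2*(t:ℤ))) (List.range m) := by
      apply List.map_congr_left
      intro t _
      simp only [Function.comp_apply, Prod.mk.injEq]
      push_cast
      constructor <;> ring
    rw [List.cons_append, h2]
    exact congrArg₂ List.cons (by simp only [Prod.mk.injEq]; constructor <;> ring) ih

lemma wJ_even (m : ℕ) :
    wJ (2 * (m : ℤ) + 2) = (2*(m:ℤ)+2, 2*(m:ℤ)+2) :: (2*(m:ℤ), 2*(m:ℤ)+2) :: JL m := by
  rw [wJ, if_pos ⟨(m:ℤ)+1, by ring⟩]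
  have hd : ((2*(m:ℤ)+2 - 2)/2).toNat = m := by
    rw [show 2*(m:ℤ)+2-2 = 2*m by ring, Int.mul_ediv_cancel_left _ (by norm_num)]
    omega
  rw [hd, ← JL_eq m]
  refine congrArg₂ List.cons rfl (congrArg₂ List.cons (by norm_num) ?_)
  exact congrArg (· ++ [((0:ℤ),(0:ℤ))])
    (List.map_congr_left fun t _ => by
      simp only [Prod.mk.injEq]; exact ⟨by ring, by ring⟩)

lemma wJ_odd (m : ℕ) :
    wJ (2 * (m : ℤ) + 1) = (2*(m:ℤ), 2*(m:ℤ)+1) :: JL m := by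
  have hodd : ¬ Even (2*(m:ℤ)+1) := by
    rintro ⟨k, hk⟩; omega
  rw [wJ, if_neg hodd]
  have hd : ((2*(m:ℤ)+1 - 1)/2).toNat = m := by
    rw [show 2*(m:ℤ)+1-1 = 2*m by ring, Int.mul_ediv_cancel_left _ (by norm_num)]
    omega
  rw [hd, ← JL_eq m]
  refine congrArg₂ List.cons (by norm_num) ?_
  exact congrArg (· ++ [((0:ℤ),(0:ℤ))])
    (List.map_congr_left fun t _ => by
      simp only [Prod.mk.injEq]; exact ⟨by ring, by ring⟩)

lemma JL_length (m : ℕ) : (JL m).length = m + 1 := by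
  induction m with
  | zero => rfl
  | succ m ih => simp [JL, ih]

lemma JL_bounds (m : ℕ) : ∀ p ∈ JL m, 0 ≤ p.1 ∧ p.1 ≤ p.2 ∧ p.2 ≤ 2 * (m:ℤ) := by
  induction m with
  | zero => rintro p hp; simp [JL] at hp; subst hp; norm_num
  | succ m ih =>
    rintro p hp
    rcases List.mem_cons.mp hp with rfl | hp
    · push_cast; constructor; omega; constructor <;> omega
    · have := ih p hp
      push_cast
      refine ⟨this.1, this.2.1, by omega⟩

/-- snds of JL m are strictly decreasing; head snd is 2m -/
lemma JL_head (m : ℕ) : ∃ p, (JL m).head? = some p ∧ p.2 = 2 * (m:ℤ) := by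
  cases m with
  | zero => exact ⟨(0,0), rfl, by norm_num⟩
  | succ m => exact ⟨(2*(m:ℤ), 2*(m:ℤ)+2), rfl, by push_cast; ring⟩

lemma JL_snd_chain (m : ℕ) : List.Chain' (fun p q : ℤ×ℤ => q.2 < p.2) (JL m) := by
  induction m with
  | zero => exact List.isChain_singleton _
  | succ m ih =>
    rw [JL]
    obtain ⟨p, hp, hp2⟩ := JL_head m
    refine List.isChain_cons.mpr ⟨?_, ih⟩
    intro q hq
    rw [hp] at hq
    simp only [Option.mem_some_iff] at hq
    subst hq
    simp only [hp2]
    push_cast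
    omega


lemma RL_chain (n : ℤ) (t : ℕ) (W : List (ℤ × ℤ))
    (hW2 : ∀ p ∈ W.head?, p.2 = n)
    (hW4 : List.Chain' (fun p q : ℤ × ℤ => q.2 ≤ p.2 ∧ (q.2 = p.2 → p.2 = n)) W) :
    List.Chain' (fun a b : ℤ => b ≤ a ∧ (b = a → a = n))
      (List.replicate t n ++ W.map Prod.snd) := by
  induction t with
  | zero => simpa [List.Chain'] using (List.isChain_map Prod.snd (R := fun a b : ℤ => b ≤ a ∧ (b = a → a = n))).mpr hW4
  | succ t ih =>
    rw [List.replicate_succ, List.cons_append]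
    refine List.isChain_cons.mpr ⟨?_, ih⟩
    intro y hy
    have hyn : y = n := by
      cases t with
      | zero =>
        simp only [List.replicate_zero, List.nil_append, List.head?_map] at hy
        rcases Option.map_eq_some_iff.mp (Option.mem_def.mp hy) with ⟨p, hp, rfl⟩
        exact hW2 p hp
      | succ t =>
        simp only [List.replicate_succ, List.cons_append, List.head?_cons,
          Option.mem_some_iff] at hy
        exact hy.symm
    exact ⟨le_of_eq hyn, fun _ => rfl⟩

lemma char (n : ℤ) (hn : 1 ≤ n) (t : ℕ) (W : List (ℤ × ℤ))
    (hW1 : W ≠ [])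
    (hW2 : ∀ p ∈ W.head?, p.2 = n)
    (hW3 : ∀ p ∈ W, 0 ≤ p.1 ∧ p.1 ≤ p.2 ∧ p.2 ≤ n)
    (hW4 : List.Chain' (fun p q : ℤ × ℤ => q.2 ≤ p.2 ∧ (q.2 = p.2 → p.2 = n)) W)
    (w : List (ℤ × ℤ)) :
    (IsPNF n w ∧ ∃ b tail : List (ℤ × ℤ), w = b ++ tail ∧ tail.length = W.length ∧
      (∀ i < W.length, (tail.getD i (0, 0)).2 = (W.getD i (0, 0)).2 ∧
        (tail.getD i (0, 0)).1 ≤ (W.getD i (0, 0)).1) ∧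
      b.countP (fun p => p.2 = n) = t) ↔
    (w.map Prod.snd = List.replicate t n ++ W.map Prod.snd ∧
     w.map Prod.fst ∈ Seqs (List.replicate t n ++ W.map Prod.fst) n) := by
  obtain ⟨p0, W', rfl⟩ := List.exists_cons_of_ne_nil hW1
  have hp0 : p0.2 = n := hW2 p0 rfl
  set W : List (ℤ × ℤ) := p0 :: W' with hWdef
  constructor
  · rintro ⟨⟨hbd, hch⟩, b, tl, rfl, hlen, hmatch, hcnt⟩
    -- tail is nonempty
    obtain ⟨q0, tl', rfl⟩ := List.exists_cons_of_ne_nil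
      (by intro h; rw [h] at hlen; simp [hWdef] at hlen : tl ≠ [])
    set tl : List (ℤ × ℤ) := q0 :: tl' with htldef
    have hq0 : q0.2 = n := by
      have := (hmatch 0 (by simp [hWdef])).1
      simpa [htldef, hWdef, hp0] using this
    -- every element of b has second coordinate n
    have hbn : ∀ p ∈ b, p.2 = n := by
      intro p hp
      letI : IsTrans (ℤ × ℤ) (fun p q : ℤ × ℤ => q.2 ≤ p.2) :=
        ⟨fun a b c h1 h2 => le_trans h2 h1⟩
      letI : Trans (fun p q : ℤ × ℤ => q.2 ≤ p.2) (fun p q : ℤ × ℤ => q.2 ≤ p.2)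
          (fun p q : ℤ × ℤ => q.2 ≤ p.2) := ⟨fun h1 h2 => le_trans h2 h1⟩
      have hpw : List.Pairwise (fun p q : ℤ × ℤ => q.2 ≤ p.2) (b ++ tl) :=
        List.isChain_iff_pairwise.mp (hch.imp fun _ _ h => h.2.1)
      have h1 : q0.2 ≤ p.2 :=
        (List.pairwise_append.mp hpw).2.2 p hp q0 (by simp [htldef])
      have h2 : p.2 ≤ n := (hbd p (List.mem_append_left _ hp)).2.2
      omega
    have hblen : b.length = t := by
      rw [← hcnt]
      exact (List.countP_eq_length.mpr fun a ha =>
        decide_eq_true (hbn a ha)).symm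
    -- second coordinates
    have hsnd : (b ++ tl).map Prod.snd = List.replicate t n ++ W.map Prod.snd := by
      rw [List.map_append]
      congr 1
      · rw [List.eq_replicate_iff]
        refine ⟨by simp [hblen], ?_⟩
        intro x hx
        obtain ⟨p, hp, rfl⟩ := List.mem_map.mp hx
        exact hbn p hp
      · apply List.ext_getElem (by simp [hlen])
        intro i h1 h2
        simp only [List.getElem_map]
        have hi : i < W.length := by simpa using h2
        have := (hmatch i hi).1
        rwa [List.getD_eq_getElem tl _ (by rw [hlen]; exact hi),
          List.getD_eq_getElem W _ hi] at this
    refine ⟨hsnd, ?_⟩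
    rw [Seqs_mem _ _ _ (by omega)]
    have hwlen : (b ++ tl).length = t + W.length := by
      simp [hblen, hlen]
    refine ⟨?_, ?_, ?_⟩
    · rw [List.forall₂_iff_get]
      constructor
      · simp [hblen, hlen]
      · intro i h1 h2
        simp only [List.get_eq_getElem, List.getElem_map]
        rcases lt_or_ge i t with hit | hit
        · have hib : i < b.length := by omega
          rw [List.getElem_append_left hib,
            List.getElem_append_left (by simp; omega : i < (List.replicate t n).length),
            List.getElem_replicate]
          have hm := hbd (b[i]) (List.mem_append_left _ (List.getElem_mem hib))
          have := hbn (b[i]) (List.getElem_mem hib)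
          exact ⟨hm.1, by omega⟩
        · have hib : b.length ≤ i := by omega
          have hIl : (List.replicate t n).length ≤ i := by simp; omega
          rw [List.getElem_append_right hib, List.getElem_append_right hIl]
          simp only [List.length_replicate, List.getElem_map, List.length_replicate]
          have hi2 : i - t < W.length := by
            simp only [List.length_map] at h1
            simp [hwlen] at h1 ⊢
            omega
          have hm := hmatch (i - t) hi2
          rw [List.getD_eq_getElem tl _ (by rw [hlen]; exact hi2),
            List.getD_eq_getElem W _ hi2] at hm
          have hbd2 := hbd (tl[i - b.length]'(by rw [hlen]; omega))
            (List.mem_append_right _ (List.getElem_mem (by rw [hlen]; omega)))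
          simp only [hblen] at hbd2 ⊢
          exact ⟨hbd2.1, hm.2⟩
    · intro x hx
      obtain ⟨p, hp, rfl⟩ := List.mem_map.mp (List.mem_of_mem_head? hx)
      have := hbd p hp
      omega
    · refine (List.isChain_map Prod.fst).mpr ?_
      refine hch.imp fun p q h => ?_
      rcases eq_or_lt_of_le h.1 with he | hlt
      · exact Or.inr (by have := h.2.2.1 he; omega)
      · exact Or.inl (by omega)
  · rintro ⟨hsnd, hfst⟩
    rw [Seqs_mem _ _ _ (by omega)] at hfst
    obtain ⟨hF, hH, hC⟩ := hfst
    have hwlen : w.length = t + W.length := by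
      have := hF.length_eq
      simpa using this
    have hsnd' : ∀ i (h : i < w.length),
        w[i].2 = (List.replicate t n ++ W.map Prod.snd)[i]'(by simp [← hwlen]; omega) := by
      intro i h
      have := congrArg (fun l => l[i]?) hsnd
      simp only [List.getElem?_map] at this
      rw [List.getElem?_eq_getElem h] at this
      simp only [Option.map_some] at this
      rw [List.getElem?_eq_getElem (by simp [← hwlen]; omega)] at this
      exact Option.some.inj this
    have hfst' : ∀ i (h : i < w.length),
        0 ≤ w[i].1 ∧
        w[i].1 ≤ (List.replicate t n ++ W.map Prod.fst)[i]'(by simp [← hwlen]; omega) := by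
      intro i h
      have := (List.forall₂_iff_get.mp hF).2 i (by simpa using h)
        (by simp [← hwlen]; omega)
      simpa using this
    -- entries of the bound/right lists
    have hRB : ∀ i (h : i < t + W.length),
        ((List.replicate t n ++ W.map Prod.fst)[i]'(by simp; omega) ≤
          (List.replicate t n ++ W.map Prod.snd)[i]'(by simp; omega)) ∧
        ((List.replicate t n ++ W.map Prod.snd)[i]'(by simp; omega) ≤ n) := by
      intro i h
      rcases lt_or_ge i t with hit | hit
      · rw [List.getElem_append_left (by simp; omega : i < (List.replicate t n).length),
          List.getElem_append_left (by simp; omega : i < (List.replicate t n).length)]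
        simp
      · rw [List.getElem_append_right (by simp; omega : (List.replicate t n).length ≤ i),
          List.getElem_append_right (by simp; omega : (List.replicate t n).length ≤ i)]
        simp only [List.length_replicate, List.getElem_map]
        have hiW : i - t < W.length := by omega
        have := hW3 (W[i - t]) (List.getElem_mem hiW)
        exact ⟨this.2.1, this.2.2⟩
    have hbd : ∀ p ∈ w, 0 ≤ p.1 ∧ p.1 ≤ p.2 ∧ p.2 ≤ n := by
      intro p hp
      obtain ⟨i, h, rfl⟩ := List.mem_iff_getElem.mp hp
      have h1 := hfst' i h
      have h2 := hsnd' i h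
      have h3 := hRB i (hwlen ▸ h)
      exact ⟨h1.1, le_trans h1.2 (le_of_le_of_eq h3.1 h2.symm),
        le_of_eq_of_le h2 h3.2⟩
    have hCsnd : List.Chain' (fun a b : ℤ => b ≤ a ∧ (b = a → a = n)) (w.map Prod.snd) := by
      rw [hsnd]; exact RL_chain n t W hW2 hW4
    have hch2 := (List.isChain_map Prod.snd).mp hCsnd
    have hch1 := (List.isChain_map Prod.fst).mp hC
    have hchain : List.Chain' (fun p q : ℤ × ℤ =>
        q.1 ≤ p.1 ∧ q.2 ≤ p.2 ∧ (q.1 = p.1 → p.1 = 0) ∧ (q.2 = p.2 → p.2 = n)) w := by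
      simp only [List.Chain', List.isChain_iff_getElem] at hch1 hch2 ⊢
      intro i h
      have a1 := hch1 i h
      have a2 := hch2 i h
      unfold SR at a1
      exact ⟨by omega, a2.1, by omega, a2.2⟩
    have htle : t ≤ w.length := by omega
    refine ⟨⟨hbd, hchain⟩, w.take t, w.drop t, (List.take_append_drop t w).symm, ?_, ?_, ?_⟩
    · rw [List.length_drop, hwlen]; omega
    · intro i hi
      have hidx : t + i < w.length := by omega
      have hdr : (w.drop t).getD i (0, 0) = w[t + i]'hidx := by
        rw [List.getD_eq_getElem _ _ (by rw [List.length_drop]; omega)]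
        exact List.getElem_drop
      rw [hdr, List.getD_eq_getElem W _ hi]
      have hRsnd : (List.replicate t n ++ W.map Prod.snd)[t + i]'(by simp; omega)
          = W[i].2 := by
        rw [List.getElem_append_right (by simp : (List.replicate t n).length ≤ t + i)]
        simp
      have hRfst : (List.replicate t n ++ W.map Prod.fst)[t + i]'(by simp; omega)
          = W[i].1 := by
        rw [List.getElem_append_right (by simp : (List.replicate t n).length ≤ t + i)]
        simp
      constructor
      · rw [hsnd' (t + i) hidx, hRsnd]
      · have := (hfst' (t + i) hidx).2
        rwa [hRfst] at this
    · have hlt : (w.take t).length = t := by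
        rw [List.length_take]; omega
      conv_rhs => rw [← hlt]
      apply List.countP_eq_length.mpr
      intro p hp
      obtain ⟨j, hj, rfl⟩ := List.mem_iff_getElem.mp hp
      have hjt : j < t := by rw [hlt] at hj; exact hj
      apply decide_eq_true
      rw [List.getElem_take]
      rw [hsnd' j (by omega)]
      rw [List.getElem_append_left (by simp; omega : j < (List.replicate t n).length)]
      exact List.getElem_replicate _

section Assembly

lemma map_fst_snd_ext {a b : List (ℤ × ℤ)}
    (h1 : a.map Prod.fst = b.map Prod.fst) (h2 : a.map Prod.snd = b.map Prod.snd) :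
    a = b := by
  have hlen : a.length = b.length := by
    have := congrArg List.length h1; simpa using this
  apply List.ext_getElem hlen
  intro i ha hb
  have e1 := List.getElem_of_eq h1 (by simpa using ha)
  have e2 := List.getElem_of_eq h2 (by simpa using ha)
  rw [List.getElem_map, List.getElem_map] at e1 e2
  exact Prod.ext e1 e2

lemma card_main (n : ℤ) (hn : 1 ≤ n) (t : ℕ) (W : List (ℤ × ℤ))
    (hW1 : W ≠ [])
    (hW2 : ∀ p ∈ W.head?, p.2 = n)
    (hW3 : ∀ p ∈ W, 0 ≤ p.1 ∧ p.1 ≤ p.2 ∧ p.2 ≤ n)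
    (hW4 : List.Chain' (fun p q : ℤ × ℤ => q.2 ≤ p.2 ∧ (q.2 = p.2 → p.2 = n)) W) :
    Nat.card {w : List (ℤ × ℤ) // IsPNF n w ∧ ∃ b tail : List (ℤ × ℤ),
      w = b ++ tail ∧ tail.length = W.length ∧
      (∀ i < W.length, (tail.getD i (0, 0)).2 = (W.getD i (0, 0)).2 ∧
        (tail.getD i (0, 0)).1 ≤ (W.getD i (0, 0)).1) ∧
      b.countP (fun p => p.2 = n) = t}
    = cnt (List.replicate t n ++ W.map Prod.fst) n := by
  set BL := List.replicate t n ++ W.map Prod.fst with hBL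
  set RL := List.replicate t n ++ W.map Prod.snd with hRL
  have hLL : RL.length = BL.length := by simp [hBL, hRL]
  rw [← Seqs_card BL n, ← Nat.card_eq_finsetCard (Seqs BL n)]
  apply Nat.card_eq_of_bijective
    (f := fun w => (⟨w.1.map Prod.fst,
      ((char n hn t W hW1 hW2 hW3 hW4 w.1).mp w.2).2⟩ : {l // l ∈ Seqs BL n}))
  constructor
  · rintro ⟨w, hw⟩ ⟨w', hw'⟩ h
    simp only [Subtype.mk.injEq] at h ⊢
    have hs := ((char n hn t W hW1 hW2 hW3 hW4 w).mp hw).1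
    have hs' := ((char n hn t W hW1 hW2 hW3 hW4 w').mp hw').1
    exact map_fst_snd_ext h (hs.trans hs'.symm)
  · rintro ⟨l, hl⟩
    have hlen : l.length = BL.length :=
      ((Seqs_mem BL n l (by omega)).mp hl).1.length_eq
    refine ⟨⟨l.zip RL, ?_⟩, ?_⟩
    · rw [char n hn t W hW1 hW2 hW3 hW4]
      constructor
      · exact List.map_snd_zip (by omega)
      · rw [List.map_fst_zip (by omega)]
        exact hl
    · simp only [Subtype.mk.injEq]
      exact List.map_fst_zip (by omega)

/-- link EL with JL -/
lemma EL_eq_JL : ∀ m : ℕ, EL m = 2 * (m : ℤ) :: (JL m).map Prod.fst := by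
  intro m
  induction m with
  | zero => simp [EL, JL]
  | succ m ih =>
    show EL (m + 1) = _ :: (JL (m+1)).map Prod.fst
    rw [EL, JL, List.map_cons, ih]
    push_cast
    ring_nf

lemma wJ_facts_even (k : ℕ) :
    let n : ℤ := 2*(k:ℤ)+2
    (wJ n ≠ [] ∧ (∀ p ∈ (wJ n).head?, p.2 = n) ∧
     (∀ p ∈ wJ n, 0 ≤ p.1 ∧ p.1 ≤ p.2 ∧ p.2 ≤ n) ∧
     List.Chain' (fun p q : ℤ × ℤ => q.2 ≤ p.2 ∧ (q.2 = p.2 → p.2 = n)) (wJ n)) ∧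
    (wJ n).map Prod.fst = EL (k+1) := by
  intro n
  have he : wJ n = (2*(k:ℤ)+2, 2*(k:ℤ)+2) :: (2*(k:ℤ), 2*(k:ℤ)+2) :: JL k := wJ_even k
  obtain ⟨ph, hph, hph2⟩ := JL_head k
  refine ⟨⟨by rw [he]; simp, ?_, ?_, ?_⟩, ?_⟩
  · rw [he]; rintro p hp
    simp only [List.head?_cons, Option.mem_some_iff] at hp
    subst hp; rfl
  · rw [he]; rintro p hp
    rcases List.mem_cons.mp hp with rfl | hp
    · refine ⟨by positivity, le_rfl, le_rfl⟩
    rcases List.mem_cons.mp hp with rfl | hp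
    · refine ⟨by positivity, by omega, le_rfl⟩
    · have := JL_bounds k p hp
      exact ⟨this.1, this.2.1, by omega⟩
  · rw [he]
    refine List.isChain_cons_cons.mpr ⟨⟨le_rfl, fun _ => rfl⟩, ?_⟩
    refine List.isChain_cons.mpr ⟨?_, ?_⟩
    · intro y hy
      rw [hph] at hy
      simp only [Option.mem_some_iff] at hy
      subst hy
      constructor
      · simp only [hph2]; omega
      · intro hcon; simp only [hph2] at hcon; omega
    · exact (JL_snd_chain k).imp fun p q h => ⟨le_of_lt h, fun hc => absurd hc (by omega)⟩
  · rw [he, List.map_cons, List.map_cons, ← EL_eq_JL k]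
    show _ = EL (k+1)
    rw [EL]

lemma wJ_facts_odd (k : ℕ) :
    let n : ℤ := 2*(k:ℤ)+1
    (wJ n ≠ [] ∧ (∀ p ∈ (wJ n).head?, p.2 = n) ∧
     (∀ p ∈ wJ n, 0 ≤ p.1 ∧ p.1 ≤ p.2 ∧ p.2 ≤ n) ∧
     List.Chain' (fun p q : ℤ × ℤ => q.2 ≤ p.2 ∧ (q.2 = p.2 → p.2 = n)) (wJ n)) ∧
    (wJ n).map Prod.fst = EL k := by
  intro n
  have he : wJ n = (2*(k:ℤ), 2*(k:ℤ)+1) :: JL k := wJ_odd k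
  obtain ⟨ph, hph, hph2⟩ := JL_head k
  refine ⟨⟨by rw [he]; simp, ?_, ?_, ?_⟩, ?_⟩
  · rw [he]; rintro p hp
    simp only [List.head?_cons, Option.mem_some_iff] at hp
    subst hp; rfl
  · rw [he]; rintro p hp
    rcases List.mem_cons.mp hp with rfl | hp
    · refine ⟨by positivity, by omega, le_rfl⟩
    · have := JL_bounds k p hp
      exact ⟨this.1, this.2.1, by omega⟩
  · rw [he]
    refine List.isChain_cons.mpr ⟨?_, ?_⟩
    · intro y hy
      rw [hph] at hy
      simp only [Option.mem_some_iff] at hy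
      subst hy
      constructor
      · simp only [hph2]; omega
      · intro hcon; simp only [hph2] at hcon; omega
    · exact (JL_snd_chain k).imp fun p q h => ⟨le_of_lt h, fun hc => absurd hc (by omega)⟩
  · rw [he, List.map_cons, ← EL_eq_JL k]

end Assembly

/-- For `n ≥ 1` and `t ≥ 0`: if `n` is even then `2·j(n,t) = C(n+1,2t+1)`, and if `n`
is odd then `2·j(n,t) = C(n+1,2t)`. -/
theorem leftExtCount_wJ (n : ℤ) (t : ℕ) (hn : 1 ≤ n) :
    (Even n → 2 * leftExtCount n (wJ n) t = blobbedC (n + 1) (2 * (t : ℤ) + 1)) ∧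
    (Odd n → 2 * leftExtCount n (wJ n) t = blobbedC (n + 1) (2 * (t : ℤ))) := by
  constructor
  · intro hev
    obtain ⟨k, rfl⟩ : ∃ k : ℕ, n = 2*(k:ℤ)+2 := by
      obtain ⟨m, rfl⟩ := hev; exact ⟨(m-1).toNat, by omega⟩
    set n : ℤ := 2*(k:ℤ)+2 with hndef
    obtain ⟨⟨h1, h2, h3, h4⟩, h5⟩ := wJ_facts_even k
    rw [leftExtCount, card_main n (by omega) t (wJ n) h1 h2 h3 h4, h5]
    have := cnt_rep n (k+1) (by omega) (by push_cast; omega) t n (by omega) le_rfl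
    rw [this]
    congr 1
    push_cast
    ring
  · intro hodd
    obtain ⟨k, rfl⟩ : ∃ k : ℕ, n = 2*(k:ℤ)+1 := by
      obtain ⟨m, rfl⟩ := hodd; exact ⟨m.toNat, by omega⟩
    set n : ℤ := 2*(k:ℤ)+1 with hndef
    obtain ⟨⟨h1, h2, h3, h4⟩, h5⟩ := wJ_facts_odd k
    rw [leftExtCount, card_main n (by omega) t (wJ n) h1 h2 h3 h4, h5]
    have := cnt_rep n k (by omega) (by omega) t n (by omega) le_rfl
    rw [this]
    congr 1
    push_cast
    ring
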